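/- arXiv:1804.02550 — 2 statements merged into one kernel-verified Lean document; each statement's English description precedes it below -/
import Mathlib

section
/- The domination number of the Knödel graph W_{4,36} is 8. -/
/-- The Knödel graph `W_{Δ,n}` with `m = n/2`: bipartite graph on `U ⊕ V`,
where `u_i` (as `Sum.inl i`, indices mod `m`) is adjacent to `v_j` (`Sum.inr j`)
iff `j ≡ i + 2^k - 1 (mod m)` for some `k < Δ`. -/
def knodel (Δ m : ℕ) : SimpleGraph (ZMod m ⊕ ZMod m) where
  Adj x y := match x, y with
    | Sum.inl i, Sum.inr j => ∃ k, k < Δ ∧ j = i + 2 ^ k - 1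
    | Sum.inr j, Sum.inl i => ∃ k, k < Δ ∧ j = i + 2 ^ k - 1
    | _, _ => False
  symm := ⟨by rintro (i | i) (j | j) h <;> exact h⟩
  loopless := ⟨by rintro (i | i) h <;> exact h⟩

/-- `D` is a dominating set of `G`: every vertex not in `D` has a neighbor in `D`. -/
def IsDominatingSet {V : Type*} (G : SimpleGraph V) (D : Set V) : Prop :=
  ∀ v ∉ D, ∃ u ∈ D, G.Adj u v

/-- The domination number: minimum cardinality of a (finite) dominating set. -/
noncomputable def dominationNumber {V : Type*} (G : SimpleGraph V) : ℕ :=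
  sInf {k | ∃ D : Set V, D.Finite ∧ D.ncard = k ∧ IsDominatingSet G D}

/-- Index-distance of `u_i` and `u_j`: `min(|i-j|, m - |i-j|)`. -/
def idDist (m i j : ℕ) : ℕ :=
  min ((i : ℤ) - (j : ℤ)).natAbs (m - ((i : ℤ) - (j : ℤ)).natAbs)

/-- `M_Δ = {2^a - 2^b : 0 ≤ b < a < Δ}`. -/
def Mset (Δ : ℕ) : Set ℕ := {d | ∃ a b : ℕ, b < a ∧ a < Δ ∧ d = 2 ^ a - 2 ^ b}


instance knodelDec : DecidableRel (knodel 4 18).Adj := by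
  rintro (i|i) (j|j) <;> unfold knodel <;> simp <;> infer_instance

/-- Closed neighborhood in `knodel 4 18` as a `Finset`. -/
def cN (v : ZMod 18 ⊕ ZMod 18) : Finset (ZMod 18 ⊕ ZMod 18) :=
  insert v (Finset.univ.filter (fun u => (knodel 4 18).Adj v u))

lemma cN_card : ∀ v : ZMod 18 ⊕ ZMod 18, (cN v).card ≤ 5 := by decide

/-- An explicit dominating set of size 8. -/
def Dfin : Finset (ZMod 18 ⊕ ZMod 18) :=
  {Sum.inl 0, Sum.inl 1, Sum.inl 9, Sum.inl 10, Sum.inr 5, Sum.inr 6, Sum.inr 14, Sum.inr 15}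

lemma Dfin_dom : ∀ v, v ∉ Dfin → ∃ u ∈ Dfin, (knodel 4 18).Adj u v := by decide

lemma lower (D : Set (ZMod 18 ⊕ ZMod 18)) (hfin : D.Finite)
    (hdom : IsDominatingSet (knodel 4 18) D) : 8 ≤ D.ncard := by
  classical
  set s := hfin.toFinset with hs
  have hsub : (Finset.univ : Finset (ZMod 18 ⊕ ZMod 18)) ⊆ s.biUnion cN := by
    intro v _
    rw [Finset.mem_biUnion]
    by_cases hv : v ∈ D
    · exact ⟨v, by simpa [hs] using hv, by simp [cN]⟩
    · obtain ⟨u, hu, hadj⟩ := hdom v hv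
      exact ⟨u, by simpa [hs] using hu, by simp [cN, hadj]⟩
  have h1 : (Finset.univ : Finset (ZMod 18 ⊕ ZMod 18)).card ≤ (s.biUnion cN).card :=
    Finset.card_le_card hsub
  have h2 : (s.biUnion cN).card ≤ ∑ d ∈ s, (cN d).card := Finset.card_biUnion_le
  have h3 : ∑ d ∈ s, (cN d).card ≤ ∑ _d ∈ s, 5 := Finset.sum_le_sum (fun d _ => cN_card d)
  have h4 : (Finset.univ : Finset (ZMod 18 ⊕ ZMod 18)).card = 36 := by decide
  have h5 : ∑ _d ∈ s, 5 = 5 * s.card := by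
    rw [Finset.sum_const]; ring
  have hcard : D.ncard = s.card := Set.ncard_eq_toFinset_card D hfin
  omega

theorem domination_knodel_36 : dominationNumber (knodel 4 18) = 8 := by
  have h8 : 8 ∈ {k | ∃ D : Set (ZMod 18 ⊕ ZMod 18),
      D.Finite ∧ D.ncard = k ∧ IsDominatingSet (knodel 4 18) D} := by
    refine ⟨↑Dfin, Dfin.finite_toSet, ?_, ?_⟩
    · rw [Set.ncard_coe_finset]; decide
    · intro v hv
      obtain ⟨u, hu, hadj⟩ := Dfin_dom v (by simpa using hv)
      exact ⟨u, by simpa using hu, hadj⟩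
  refine le_antisymm (Nat.sInf_le h8) (le_csInf ⟨8, h8⟩ ?_)
  rintro k ⟨D, hfin, hcard, hdom⟩
  exact hcard ▸ lower D hfin hdom
end

section
/- The domination number of the Knödel graph W_{4,18} is 4. -/
abbrev V18 := ZMod 9 ⊕ ZMod 9

/-- Closed neighborhood in `knodel 4 9`, as an explicit finset. -/
def cnbr : V18 → Finset V18
  | Sum.inl i => {Sum.inl i, Sum.inr i, Sum.inr (i+1), Sum.inr (i+3), Sum.inr (i+7)}
  | Sum.inr j => {Sum.inr j, Sum.inl j, Sum.inl (j-1), Sum.inl (j-3), Sum.inl (j-7)}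

lemma card_cnbr (x : V18) : (cnbr x).card ≤ 5 := by
  cases x <;> · refine (Finset.card_insert_le _ _).trans (Nat.succ_le_succ ?_)
                refine (Finset.card_insert_le _ _).trans (Nat.succ_le_succ ?_)
                refine (Finset.card_insert_le _ _).trans (Nat.succ_le_succ ?_)
                refine (Finset.card_insert_le _ _).trans (Nat.succ_le_succ ?_)
                simp

lemma self_mem_cnbr (x : V18) : x ∈ cnbr x := by cases x <;> simp [cnbr]

lemma mem_cnbr_of_adj {u v : V18} (h : (knodel 4 9).Adj u v) : v ∈ cnbr u := by
  rcases u with i | i <;> rcases v with j | j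
  · exact absurd h (by simp [knodel])
  · obtain ⟨k, hk, rfl⟩ : ∃ k, k < 4 ∧ j = i + 2 ^ k - 1 := h
    interval_cases k <;> simp [cnbr] <;> ring_nf <;> tauto
  · obtain ⟨k, hk, rfl⟩ : ∃ k, k < 4 ∧ i = j + 2 ^ k - 1 := h
    interval_cases k <;> simp [cnbr] <;> ring_nf <;> tauto
  · exact absurd h (by simp [knodel])

def D4 : Finset V18 := {Sum.inl 0, Sum.inl 1, Sum.inr 5, Sum.inr 6}

instance adjDec : DecidableRel (knodel 4 9).Adj := by
  rintro (i | i) (j | j)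
  · exact .isFalse fun h => h
  · exact decidable_of_iff (∃ k ∈ Finset.range 4, j = i + 2 ^ k - 1) (by simp [knodel])
  · exact decidable_of_iff (∃ k ∈ Finset.range 4, i = j + 2 ^ k - 1) (by simp [knodel])
  · exact .isFalse fun h => h

lemma dom4 : IsDominatingSet (knodel 4 9) ↑D4 := by
  have : ∀ v : V18, v ∉ D4 → ∃ u ∈ D4, (knodel 4 9).Adj u v := by decide
  intro v hv
  obtain ⟨u, hu, h⟩ := this v (by simpa using hv)
  exact ⟨u, by simpa using hu, h⟩

lemma lower_bound {k : ℕ} (D : Set V18) (hfin : D.Finite) (hcard : D.ncard = k)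
    (hdom : IsDominatingSet (knodel 4 9) D) : 4 ≤ k := by
  classical
  set Dt := hfin.toFinset with hDt
  have hsub : (Finset.univ : Finset V18) ⊆ Dt.biUnion cnbr := by
    intro v _
    rw [Finset.mem_biUnion]
    by_cases hv : v ∈ D
    · exact ⟨v, hfin.mem_toFinset.mpr hv, self_mem_cnbr v⟩
    · obtain ⟨u, hu, hadj⟩ := hdom v hv
      exact ⟨u, hfin.mem_toFinset.mpr hu, mem_cnbr_of_adj hadj⟩
  have h18 : (Finset.univ : Finset V18).card = 18 := by decide
  have h1 : 18 ≤ (Dt.biUnion cnbr).card := h18 ▸ Finset.card_le_card hsub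
  have h2 : (Dt.biUnion cnbr).card ≤ ∑ u ∈ Dt, (cnbr u).card := Finset.card_biUnion_le
  have h3 : ∑ u ∈ Dt, (cnbr u).card ≤ Dt.card * 5 := by
    calc ∑ u ∈ Dt, (cnbr u).card ≤ ∑ _u ∈ Dt, 5 :=
          Finset.sum_le_sum fun u _ => card_cnbr u
      _ = Dt.card * 5 := by rw [Finset.sum_const, smul_eq_mul]
  have hk : Dt.card = k := by
    rw [← hcard, Set.ncard_eq_toFinset_card _ hfin]
  omega

theorem domination_knodel_18 : dominationNumber (knodel 4 9) = 4 := by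
  have h4 : 4 ∈ {k | ∃ D : Set V18, D.Finite ∧ D.ncard = 4 ∧ IsDominatingSet (knodel 4 9) D} :=
    ⟨↑D4, D4.finite_toSet, by rw [Set.ncard_coe_finset]; decide, dom4⟩
  refine le_antisymm (Nat.sInf_le h4) (le_csInf ⟨4, h4⟩ ?_)
  rintro k ⟨D, hfin, hcard, hdom⟩
  exact lower_bound D hfin hcard hdom
end
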